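/- Let $A \in \mathbb{C}^{p \times p}$ have all eigenvalues either equal to zero or with strictly negative real part, and suppose every Jordan block of $A$ corresponding to the eigenvalue zero is of size one (i.e., $\ker A = \ker A^2$). Then there exists $M \geq 0$ such that for all $z \in \mathbb{C}_+$ (the open right half-plane), $I - \tfrac{1}{z} A$ is invertible and $\|(I - \tfrac{1}{z} A)^{-1}\| \leq M$. -/

import Mathlib

attribute [local instance] Matrix.linftyOpNormedAddCommGroup Matrix.linftyOpNormedRing
  Matrix.linftyOpNormedSpace Matrix.linftyOpNormedAlgebra

set_option maxHeartbeats 1000000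

/-- If every eigenvalue of `A` is zero or has strictly negative real part, and the zero
eigenvalue is semisimple (`ker A = ker A²`), then `(I - z⁻¹ A)⁻¹` exists and is uniformly
bounded for `z` in the open right half-plane. -/
theorem inv_one_sub_smul_uniform_bound (p : ℕ) (A : Matrix (Fin p) (Fin p) ℂ)
    (hspec : ∀ μ ∈ spectrum ℂ A, μ = 0 ∨ μ.re < 0)
    (hsemi : LinearMap.ker A.mulVecLin = LinearMap.ker (A * A).mulVecLin) :
    ∃ M : ℝ, 0 ≤ M ∧ ∀ z : ℂ, 0 < z.re →
      IsUnit ((1 : Matrix (Fin p) (Fin p) ℂ) - z⁻¹ • A) ∧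
      ‖((1 : Matrix (Fin p) (Fin p) ℂ) - z⁻¹ • A)⁻¹‖ ≤ M := by
  classical
  -- Step 1: invertibility of `1 - w • A` on the closed right half-plane.
  have hdet : ∀ w : ℂ, 0 ≤ w.re → IsUnit ((1 : Matrix (Fin p) (Fin p) ℂ) - w • A) := by
    intro w hw
    rw [Matrix.isUnit_iff_isUnit_det, isUnit_iff_ne_zero]
    intro hd
    obtain ⟨v, hv, hveq⟩ := (Matrix.exists_mulVec_eq_zero_iff).2 hd
    rw [Matrix.sub_mulVec, Matrix.one_mulVec, Matrix.smul_mulVec, sub_eq_zero] at hveq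
    have hw0 : w ≠ 0 := by
      rintro rfl
      rw [zero_smul] at hveq
      exact hv hveq
    have heig : A.mulVec v = w⁻¹ • v := by
      have h := congrArg (fun u => w⁻¹ • u) hveq
      simp only [smul_smul, inv_mul_cancel₀ hw0, one_smul] at h
      exact h.symm
    have hmem : w⁻¹ ∈ spectrum ℂ A := by
      rw [spectrum.mem_iff]
      rw [Matrix.isUnit_iff_isUnit_det, isUnit_iff_ne_zero, not_not]
      apply (Matrix.exists_mulVec_eq_zero_iff).1
      refine ⟨v, hv, ?_⟩
      rw [Algebra.algebraMap_eq_smul_one, Matrix.sub_mulVec, Matrix.smul_mulVec,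
        Matrix.one_mulVec, heig, sub_self]
    rcases hspec _ hmem with h0 | hneg
    · exact hw0 (inv_eq_zero.mp h0)
    · have : 0 ≤ (w⁻¹).re := by
        rw [Complex.inv_re]
        exact div_nonneg hw (Complex.normSq_nonneg w)
      linarith
  -- Step 2: projections from semisimplicity.
  set L := A.mulVecLin with hLdef
  have hLL : LinearMap.ker (L ∘ₗ L) = LinearMap.ker L := by
    rw [hsemi, Matrix.mulVecLin_mul]
  set K := LinearMap.ker L with hK
  set Rg := LinearMap.range L with hRg
  have hdisj : Disjoint K Rg := by
    rw [Submodule.disjoint_def]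
    rintro x hxK ⟨y, rfl⟩
    have hy : y ∈ LinearMap.ker (L ∘ₗ L) := by
      rw [LinearMap.mem_ker, LinearMap.comp_apply]
      exact hxK
    rw [hLL, LinearMap.mem_ker] at hy
    exact hy
  have hcompl : IsCompl K Rg := by
    refine ⟨hdisj, codisjoint_iff.2 ?_⟩
    apply Submodule.eq_top_of_finrank_eq
    have h1 := Submodule.finrank_sup_add_finrank_inf_eq K Rg
    rw [hdisj.eq_bot, finrank_bot] at h1
    have h2 := LinearMap.finrank_range_add_finrank_ker L
    rw [← hK, ← hRg] at h2
    omega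
  let π : (Fin p → ℂ) →ₗ[ℂ] (Fin p → ℂ) := K.subtype ∘ₗ (K.linearProjOfIsCompl Rg hcompl)
  have hπmem : ∀ x, x - π x ∈ Rg := by
    intro x
    have hx : (K.linearProjOfIsCompl Rg hcompl x : Fin p → ℂ) +
        (Rg.linearProjOfIsCompl K hcompl.symm x) = x :=
      Submodule.projection_add_projection_eq_self hcompl x
    have : x - π x = ↑(Rg.linearProjOfIsCompl K hcompl.symm x) := by
      show x - (K.linearProjOfIsCompl Rg hcompl x : Fin p → ℂ) = _
      rw [sub_eq_iff_eq_add']; exact hx.symm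
    rw [this]
    exact Submodule.coe_mem _
  have hLπ : ∀ x, L (π x) = 0 := by
    intro x
    have : (K.linearProjOfIsCompl Rg hcompl x : Fin p → ℂ) ∈ K :=
      Submodule.coe_mem _
    exact LinearMap.mem_ker.1 this
  obtain ⟨g, hg⟩ := L.rangeRestrict.exists_rightInverse_of_surjective L.range_rangeRestrict
  let c : (Fin p → ℂ) →ₗ[ℂ] (Fin p → ℂ) :=
    g ∘ₗ (LinearMap.codRestrict Rg (LinearMap.id - π) (fun x => by
      simpa using hπmem x))
  have hLc : ∀ x, L (c x) = x - π x := by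
    intro x
    have h1 : L.rangeRestrict (g ⟨x - π x, hπmem x⟩) = ⟨x - π x, hπmem x⟩ :=
      LinearMap.congr_fun hg _
    have h2 : L (c x) = ↑(L.rangeRestrict (g ⟨x - π x, hπmem x⟩)) := rfl
    rw [h2, h1]
  -- Matrices of the projections.
  set P : Matrix (Fin p) (Fin p) ℂ := LinearMap.toMatrix' π with hPdef
  set Cm : Matrix (Fin p) (Fin p) ℂ := LinearMap.toMatrix' c with hCdef
  have htmA : LinearMap.toMatrix' L = A := by
    rw [hLdef, ← Matrix.toLin'_apply', LinearMap.toMatrix'_toLin']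
  have hAP : A * P = 0 := by
    rw [← htmA, hPdef, ← LinearMap.toMatrix'_comp]
    have : L ∘ₗ π = 0 := LinearMap.ext fun x => hLπ x
    rw [this, map_zero]
  have hAC : A * Cm = 1 - P := by
    rw [← htmA, hCdef, ← LinearMap.toMatrix'_comp]
    have : L ∘ₗ c = LinearMap.id - π := LinearMap.ext fun x => by
      simp [hLc x]
    rw [this, map_sub, LinearMap.toMatrix'_id, hPdef]
  -- Step 3: the key identity.
  have key : ∀ w : ℂ, w ≠ 0 → 0 ≤ w.re →
      ((1 : Matrix (Fin p) (Fin p) ℂ) - w • A)⁻¹ =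
        P + w⁻¹ • ((((1 : Matrix (Fin p) (Fin p) ℂ) - w • A)⁻¹ - 1) * Cm) := by
    intro w hw0 hw
    have hu := hdet w hw
    have hdu : IsUnit ((1 : Matrix (Fin p) (Fin p) ℂ) - w • A).det :=
      (Matrix.isUnit_iff_isUnit_det _).1 hu
    set B := ((1 : Matrix (Fin p) (Fin p) ℂ) - w • A)⁻¹ with hBdef
    have hBmul : B * ((1 : Matrix (Fin p) (Fin p) ℂ) - w • A) = 1 :=
      Matrix.nonsing_inv_mul _ hdu
    have hBA : B * A = w⁻¹ • (B - 1) := by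
      have h1 : B * (w • A) = B - 1 := by
        have : B * ((1 : Matrix (Fin p) (Fin p) ℂ) - w • A) = B - B * (w • A) := by
          rw [mul_sub, mul_one]
        rw [this] at hBmul
        simpa [sub_sub_cancel] using congrArg (fun X => B - X) hBmul
      calc B * A = w⁻¹ • (B * (w • A)) := by
            rw [mul_smul_comm, smul_smul, inv_mul_cancel₀ hw0, one_smul]
        _ = w⁻¹ • (B - 1) := by rw [h1]
    have hBP : B * P = P := by
      have h1 : ((1 : Matrix (Fin p) (Fin p) ℂ) - w • A) * P = P := by
        rw [sub_mul, one_mul, Matrix.smul_mul, hAP, smul_zero, sub_zero]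
      calc B * P = B * (((1 : Matrix (Fin p) (Fin p) ℂ) - w • A) * P) := by rw [h1]
        _ = (B * ((1 : Matrix (Fin p) (Fin p) ℂ) - w • A)) * P := by rw [mul_assoc]
        _ = P := by rw [hBmul, one_mul]
    have : B - P = w⁻¹ • ((B - 1) * Cm) := by
      calc B - P = B * (1 - P) := by rw [mul_sub, mul_one, hBP]
        _ = B * (A * Cm) := by rw [hAC]
        _ = (B * A) * Cm := by rw [mul_assoc]
        _ = (w⁻¹ • (B - 1)) * Cm := by rw [hBA]
        _ = w⁻¹ • ((B - 1) * Cm) := by rw [Matrix.smul_mul]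
    exact sub_eq_iff_eq_add'.mp this
  -- Step 4: bound for large ‖w‖.
  set Kc : ℝ := ‖Cm‖ with hKc
  set c1 : ℝ := ‖(1 : Matrix (Fin p) (Fin p) ℂ)‖ with hc1
  set R : ℝ := max 1 (2 * Kc) with hR
  have hKc0 : 0 ≤ Kc := norm_nonneg _
  have hc10 : 0 ≤ c1 := norm_nonneg _
  have hbig : ∀ w : ℂ, 0 ≤ w.re → R ≤ ‖w‖ →
      ‖((1 : Matrix (Fin p) (Fin p) ℂ) - w • A)⁻¹‖ ≤ 2 * ‖P‖ + 2 * (c1 * Kc) := by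
    intro w hw hwR
    have hw1 : (1 : ℝ) ≤ ‖w‖ := le_trans (le_max_left _ _) hwR
    have hw0 : w ≠ 0 := by
      intro h; rw [h, norm_zero] at hw1; linarith
    have hwpos : (0 : ℝ) < ‖w‖ := by linarith
    set B := ((1 : Matrix (Fin p) (Fin p) ℂ) - w • A)⁻¹ with hBdef
    have hk := key w hw0 hw
    have hest : ‖B‖ ≤ ‖P‖ + (‖B‖ + c1) * Kc / ‖w‖ := by
      calc ‖B‖ = ‖P + w⁻¹ • ((B - 1) * Cm)‖ := by rw [← hk]
        _ ≤ ‖P‖ + ‖w⁻¹ • ((B - 1) * Cm)‖ := norm_add_le _ _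
        _ = ‖P‖ + ‖w⁻¹‖ * ‖(B - 1) * Cm‖ := by rw [norm_smul]
        _ ≤ ‖P‖ + ‖w⁻¹‖ * (‖B - 1‖ * ‖Cm‖) := by
            gcongr
            exact norm_mul_le _ _
        _ ≤ ‖P‖ + ‖w⁻¹‖ * ((‖B‖ + c1) * ‖Cm‖) := by
            gcongr
            exact norm_sub_le _ _
        _ = ‖P‖ + (‖B‖ + c1) * Kc / ‖w‖ := by
            rw [norm_inv, div_eq_inv_mul, hKc]
    have hhalf : Kc / ‖w‖ ≤ 1 / 2 := by
      rw [div_le_div_iff₀ hwpos (by norm_num : (0:ℝ) < 2)]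
      have : 2 * Kc ≤ ‖w‖ := le_trans (le_max_right 1 (2 * Kc)) hwR
      linarith
    have hinv1 : c1 * Kc / ‖w‖ ≤ c1 * Kc := by
      apply div_le_self (by positivity) hw1
    have hBnn : 0 ≤ ‖B‖ := norm_nonneg _
    have hexp : (‖B‖ + c1) * Kc / ‖w‖ = ‖B‖ * (Kc / ‖w‖) + c1 * Kc / ‖w‖ := by
      field_simp
    rw [hexp] at hest
    nlinarith [mul_le_mul_of_nonneg_left hhalf hBnn, norm_nonneg P]
  -- Step 5: bound on the compact part.
  haveI : CompleteSpace (Matrix (Fin p) (Fin p) ℂ) := FiniteDimensional.complete ℂ _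
  set D : Set ℂ := Metric.closedBall 0 R ∩ {w : ℂ | 0 ≤ w.re} with hD
  have hDcompact : IsCompact D :=
    (isCompact_closedBall 0 R).inter_right (isClosed_le continuous_const Complex.continuous_re)
  have hcont : ContinuousOn (fun w : ℂ => ((1 : Matrix (Fin p) (Fin p) ℂ) - w • A)⁻¹) D := by
    intro w hw
    apply ContinuousAt.continuousWithinAt
    have hu := hdet w hw.2
    have hgc : ContinuousAt (fun w : ℂ => (1 : Matrix (Fin p) (Fin p) ℂ) - w • A) w :=
      (continuous_const.sub (continuous_id.smul continuous_const)).continuousAt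
    have hic : ContinuousAt Ring.inverse ((1 : Matrix (Fin p) (Fin p) ℂ) - w • A) := by
      have := NormedRing.inverse_continuousAt hu.unit
      rwa [IsUnit.unit_spec] at this
    have hcomp : ContinuousAt
        (Ring.inverse ∘ (fun w : ℂ => (1 : Matrix (Fin p) (Fin p) ℂ) - w • A)) w :=
      ContinuousAt.comp (g := Ring.inverse)
        (f := fun w : ℂ => (1 : Matrix (Fin p) (Fin p) ℂ) - w • A) hic hgc
    simp only [Matrix.nonsing_inv_eq_ringInverse]; exact hcomp
  obtain ⟨M1, hM1⟩ := hDcompact.exists_bound_of_continuousOn hcont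
  -- Conclusion.
  refine ⟨max 0 (max M1 (2 * ‖P‖ + 2 * (c1 * Kc))), le_max_left _ _, ?_⟩
  intro z hz
  have hz0 : z ≠ 0 := by
    intro h; rw [h] at hz; simp at hz
  have hwre : 0 ≤ (z⁻¹).re := by
    rw [Complex.inv_re]
    exact div_nonneg hz.le (Complex.normSq_nonneg z)
  refine ⟨hdet _ hwre, ?_⟩
  by_cases hcase : ‖(z⁻¹ : ℂ)‖ ≤ R
  · have hmem : z⁻¹ ∈ D := by
      constructor
      · rwa [Metric.mem_closedBall, dist_zero_right]
      · exact hwre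
    exact le_trans (hM1 _ hmem) (le_trans (le_max_left _ _) (le_max_right _ _))
  · push_neg at hcase
    exact le_trans (hbig _ hwre hcase.le)
      (le_trans (le_max_right _ _) (le_max_right _ _))
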